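/- If C is a free E-linear code of length 2n, then the left symplectic double dual recovers C: (C^{⊥_{S_L}})^{⊥_{S_L}} = C. -/

import Mathlib

open Finset

/-- The non-unital ring `E`, realized as pairs `(u, v) ∈ F₂ × F₂`
representing `uκ + vζ`. -/
def Ering : Type := (ZMod 2) × (ZMod 2)

namespace Ering

instance : AddCommGroup Ering := inferInstanceAs (AddCommGroup ((ZMod 2) × (ZMod 2)))
instance : DecidableEq Ering := inferInstanceAs (DecidableEq ((ZMod 2) × (ZMod 2)))
instance : Fintype Ering := inferInstanceAs (Fintype ((ZMod 2) × (ZMod 2)))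

instance : Mul Ering := ⟨fun a b => (a.1 * b.1, a.2 * b.1)⟩

instance : NonUnitalRing Ering :=
  { (inferInstance : AddCommGroup Ering), (inferInstance : Mul Ering) with
    left_distrib := by decide
    right_distrib := by decide
    zero_mul := by decide
    mul_zero := by decide
    mul_assoc := by decide }

/-- The generator κ. -/
def kappa : Ering := ((1 : ZMod 2), (0 : ZMod 2))
/-- The generator τ. -/
def tau : Ering := ((1 : ZMod 2), (1 : ZMod 2))
/-- ζ = κ + τ. -/
def zeta : Ering := ((0 : ZMod 2), (1 : ZMod 2))

/-- The scalar action of `F₂` on `E`: `u • e = e` if `u = 1`, else `0`. -/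
def fsmul (u : ZMod 2) (e : Ering) : Ering := if u = 1 then e else 0

/-- `E`-vectors of length `2n`, written as a pair `(u | v)` of halves of length `n`. -/
abbrev VE (n : ℕ) := (Fin n → Ering) × (Fin n → Ering)

/-- `F₂`-vectors of length `2n`, written as a pair of halves of length `n`. -/
abbrev VF (n : ℕ) := (Fin n → ZMod 2) × (Fin n → ZMod 2)

/-- Symplectic inner product on `E^{2n}`: `⟨(u|v),(u'|v')⟩ₛ = ⟨u,v'⟩ + ⟨v,u'⟩`. -/
def sympE {n : ℕ} (x y : VE n) : Ering := ∑ i, x.1 i * y.2 i + ∑ i, x.2 i * y.1 i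

/-- Symplectic inner product on `F₂^{2n}`. -/
def sympF {n : ℕ} (x y : VF n) : ZMod 2 := ∑ i, x.1 i * y.2 i + ∑ i, x.2 i * y.1 i

/-- An `E`-linear code: a left `E`-submodule of `E^{2n}`. -/
def IsLinearCode {n : ℕ} (C : Set (VE n)) : Prop :=
  (0 : VE n) ∈ C ∧ (∀ x ∈ C, ∀ y ∈ C, x + y ∈ C) ∧
    (∀ e : Ering, ∀ x ∈ C, ((fun i => e * x.1 i, fun i => e * x.2 i) : VE n) ∈ C)

/-- Componentwise reduction `π : E^{2n} → F₂^{2n}`, `π(uκ + vζ) = u`. -/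
def resVec {n : ℕ} (x : VE n) : VF n := (fun i => (x.1 i).1, fun i => (x.2 i).1)

/-- For `e ∈ E` and `v ∈ F₂^{2n}`, the vector `ev ∈ E^{2n}` with entries `vᵢ • e`. -/
def evec {n : ℕ} (e : Ering) (v : VF n) : VE n :=
  (fun i => fsmul (v.1 i) e, fun i => fsmul (v.2 i) e)

/-- The residue code `C_Res = π(C)`. -/
def resCode {n : ℕ} (C : Set (VE n)) : Set (VF n) := resVec '' C

/-- The torsion code `C_Tor = {v : ζv ∈ C}`. -/
def torCode {n : ℕ} (C : Set (VE n)) : Set (VF n) := {v | evec zeta v ∈ C}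

/-- The left symplectic dual. -/
def leftDual {n : ℕ} (C : Set (VE n)) : Set (VE n) := {z | ∀ w ∈ C, sympE z w = 0}

/-- The right symplectic dual. -/
def rightDual {n : ℕ} (C : Set (VE n)) : Set (VE n) := {z | ∀ w ∈ C, sympE w z = 0}

/-- The two-sided symplectic dual. -/
def dual {n : ℕ} (C : Set (VE n)) : Set (VE n) := leftDual C ∩ rightDual C

/-- The binary symplectic dual of `D ⊆ F₂^{2n}`. -/
def dualF {n : ℕ} (D : Set (VF n)) : Set (VF n) := {z | ∀ w ∈ D, sympF z w = 0}

/-- The two-sided symplectic hull. -/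
def SHull {n : ℕ} (C : Set (VE n)) : Set (VE n) := C ∩ dual C

/-- The left symplectic hull. -/
def LSHull {n : ℕ} (C : Set (VE n)) : Set (VE n) := C ∩ leftDual C

/-- The right symplectic hull. -/
def RSHull {n : ℕ} (C : Set (VE n)) : Set (VE n) := C ∩ rightDual C

/-- Symplectic hull of a binary code. -/
def SHullF {n : ℕ} (D : Set (VF n)) : Set (VF n) := D ∩ dualF D

/-- A free `E`-linear code: residue and torsion codes coincide. -/
def IsFree {n : ℕ} (C : Set (VE n)) : Prop := resCode C = torCode C

end Ering

open Ering
section Aux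
open Finset Ering

namespace Ering

/-- second coordinates -/
def torVec {n : ℕ} (x : VE n) : VF n := (fun i => (x.1 i).2, fun i => (x.2 i).2)

lemma pair_eq (x y : Ering) (h1 : x.1 = y.1) (h2 : x.2 = y.2) : x = y :=
  Prod.ext h1 h2

/-- fst as an additive hom on Ering -/
def fstHom : Ering →+ ZMod 2 := { toFun := Prod.fst, map_zero' := rfl, map_add' := fun _ _ => rfl }
def sndHom : Ering →+ ZMod 2 := { toFun := Prod.snd, map_zero' := rfl, map_add' := fun _ _ => rfl }

lemma sympF_comm {n : ℕ} (x y : VF n) : sympF x y = sympF y x := by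
  simp only [sympF]
  rw [add_comm]
  congr 1 <;> exact Finset.sum_congr rfl (fun i _ => mul_comm _ _)

lemma sympE_eq {n : ℕ} (z w : VE n) :
    sympE z w = ((sympF (resVec z) (resVec w), sympF (torVec z) (resVec w)) : ZMod 2 × ZMod 2) := by
  refine pair_eq _ _ ?_ ?_
  · show fstHom (sympE z w) = _
    simp only [sympE, map_add, map_sum, sympF]
    rfl
  · show sndHom (sympE z w) = _
    simp only [sympE, map_add, map_sum, sympF]
    rfl

lemma leftDual_eq {n : ℕ} (C : Set (VE n)) :
    leftDual C = {z | resVec z ∈ dualF (resCode C) ∧ torVec z ∈ dualF (resCode C)} := by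
  ext z
  constructor
  · intro hz
    constructor
    · rintro a ⟨w, hw, rfl⟩
      have h := hz w hw
      rw [sympE_eq] at h
      exact congrArg Prod.fst h
    · rintro a ⟨w, hw, rfl⟩
      have h := hz w hw
      rw [sympE_eq] at h
      exact congrArg Prod.snd h
  · rintro ⟨h1, h2⟩ w hw
    rw [sympE_eq, h1 _ ⟨w, hw, rfl⟩, h2 _ ⟨w, hw, rfl⟩]
    rfl

lemma fsmul_kappa_eq : ∀ c : ZMod 2, fsmul c kappa = ((c, 0) : ZMod 2 × ZMod 2) := by
  intro c; fin_cases c <;> rfl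
lemma fsmul_fst_kappa : ∀ e : Ering, fsmul e.1 kappa = kappa * e := by decide
lemma fsmul_snd_zeta : ∀ e : Ering, fsmul e.2 zeta = e + kappa * e := by decide
lemma ering_decomp : ∀ e : Ering, e = fsmul e.1 kappa + fsmul e.2 zeta := by decide

lemma sympF_zero_left {n : ℕ} (w : VF n) : sympF 0 w = 0 := by
  simp [sympF]

lemma resCode_leftDual {n : ℕ} (C : Set (VE n)) :
    resCode (leftDual C) = dualF (resCode C) := by
  apply Set.Subset.antisymm
  · rintro a ⟨z, hz, rfl⟩
    rw [leftDual_eq] at hz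
    exact hz.1
  · intro a ha
    have hres : resVec (evec kappa a) = a := by
      refine Prod.ext (funext fun i => ?_) (funext fun i => ?_) <;>
        simp [resVec, evec, fsmul_kappa_eq]
    have htor : torVec (evec kappa a) = 0 := by
      refine Prod.ext (funext fun i => ?_) (funext fun i => ?_) <;>
        · simp only [torVec, evec, fsmul_kappa_eq]; rfl
    refine ⟨evec kappa a, ?_, hres⟩
    rw [leftDual_eq]
    refine ⟨by rw [hres]; exact ha, ?_⟩
    rw [htor]
    intro w _; exact sympF_zero_left w

/-- binary double duality -/
lemma dualF_dualF {n : ℕ} (D : Set (VF n)) (h0 : (0 : VF n) ∈ D)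
    (hadd : ∀ x ∈ D, ∀ y ∈ D, x + y ∈ D) : dualF (dualF D) = D := by
  classical
  -- D as a submodule
  let W : Submodule (ZMod 2) (VF n) :=
    { carrier := D
      add_mem' := fun hx hy => hadd _ hx _ hy
      zero_mem' := h0
      smul_mem' := by
        intro c x hx
        have hc : c = 0 ∨ c = 1 := by revert c; decide
        rcases hc with rfl | rfl
        · simpa using h0
        · simpa using hx }
  apply Set.Subset.antisymm
  · intro z hz
    by_contra hzD
    have hzW : z ∉ W := hzD
    rw [← Subspace.forall_mem_dualAnnihilator_apply_eq_zero_iff W z] at hzW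
    push_neg at hzW
    obtain ⟨φ, hφW, hφz⟩ := hzW
    rw [Submodule.mem_dualAnnihilator] at hφW
    -- represent φ by a vector w via the symplectic form
    set w : VF n := (fun i => φ ((0, Pi.single i 1) : VF n), fun i => φ ((Pi.single i 1, 0) : VF n)) with hw
    have hrep : ∀ x : VF n, sympF w x = φ x := by
      intro x
      have hx : x = (∑ i, x.1 i • ((Pi.single i 1, 0) : VF n))
          + ∑ i, x.2 i • ((0, Pi.single i 1) : VF n) := by
        refine Prod.ext ?_ ?_ <;>
        · funext j
          simp [Prod.fst_sum, Prod.snd_sum, Finset.sum_apply, Pi.single_apply,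
            mul_ite, Finset.sum_ite_eq]
      calc sympF w x = ∑ i, x.1 i * φ ((Pi.single i 1, 0) : VF n)
            + ∑ i, x.2 i * φ ((0, Pi.single i 1) : VF n) := by
              rw [sympF, add_comm]
              congr 1 <;> exact Finset.sum_congr rfl (fun i _ => mul_comm _ _)
        _ = φ x := by
              conv_rhs => rw [hx]
              rw [map_add, map_sum, map_sum]
              congr 1 <;> exact Finset.sum_congr rfl
                (fun i _ => by rw [map_smul, smul_eq_mul])
    have hwD : w ∈ dualF D := by
      intro d hd
      rw [hrep d]
      exact hφW d hd
    have := hz w hwD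
    rw [sympF_comm, hrep] at this
    exact hφz this
  · intro d hd w hw
    rw [sympF_comm]
    exact hw d hd

lemma free_eq {n : ℕ} (C : Set (VE n)) (hC : IsLinearCode C) (hfree : IsFree C) :
    C = {z | resVec z ∈ resCode C ∧ torVec z ∈ resCode C} := by
  obtain ⟨h0, hadd, hsmul⟩ := hC
  apply Set.Subset.antisymm
  · intro z hz
    refine ⟨⟨z, hz, rfl⟩, ?_⟩
    rw [hfree]
    show evec zeta (torVec z) ∈ C
    have hk := hsmul kappa z hz
    have := hadd z hz _ hk
    have heq : evec zeta (torVec z)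
        = z + ((fun i => kappa * z.1 i, fun i => kappa * z.2 i) : VE n) := by
      refine Prod.ext (funext fun i => ?_) (funext fun i => ?_) <;>
        exact fsmul_snd_zeta _
    rw [heq]; exact this
  · rintro z ⟨h1, h2⟩
    obtain ⟨y, hy, hry⟩ := h1
    rw [hfree] at h2
    have hk := hsmul kappa y hy
    have hkey : evec kappa (resVec z) = ((fun i => kappa * y.1 i, fun i => kappa * y.2 i) : VE n) := by
      refine Prod.ext (funext fun i => ?_) (funext fun i => ?_)
      · show fsmul ((resVec z).1 i) kappa = _
        rw [← hry]
        exact fsmul_fst_kappa _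
      · show fsmul ((resVec z).2 i) kappa = _
        rw [← hry]
        exact fsmul_fst_kappa _
    have hmem : evec kappa (resVec z) ∈ C := by rw [hkey]; exact hk
    have hsum := hadd _ hmem _ h2
    have hz : z = evec kappa (resVec z) + evec zeta (torVec z) := by
      refine Prod.ext (funext fun i => ?_) (funext fun i => ?_) <;>
        exact ering_decomp _
    rw [hz]; exact hsum

lemma resCode_zero_mem {n : ℕ} (C : Set (VE n)) (hC : IsLinearCode C) :
    (0 : VF n) ∈ resCode C :=
  ⟨0, hC.1, rfl⟩

lemma resCode_add_mem {n : ℕ} (C : Set (VE n)) (hC : IsLinearCode C) :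
    ∀ x ∈ resCode C, ∀ y ∈ resCode C, x + y ∈ resCode C := by
  rintro _ ⟨x, hx, rfl⟩ _ ⟨y, hy, rfl⟩
  exact ⟨x + y, hC.2.1 x hx y hy, rfl⟩

end Ering

end Aux

theorem Ering.leftDual_leftDual' {n : ℕ} (C : Set (VE n)) (hC : IsLinearCode C)
    (hfree : IsFree C) : leftDual (leftDual C) = C := by
  rw [leftDual_eq (leftDual C), resCode_leftDual,
    dualF_dualF _ (resCode_zero_mem C hC) (resCode_add_mem C hC)]
  exact (free_eq C hC hfree).symm
/-- for a free code, the left symplectic double dual recovers `C`. -/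
theorem Ering.leftDual_leftDual {n : ℕ} (C : Set (VE n)) (hC : IsLinearCode C)
    (hfree : IsFree C) : leftDual (leftDual C) = C := leftDual_leftDual' C hC hfree
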